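/- Under the edge-addition transition model, for every node i and horizon T, the set function S ↦ p_i^T(S) (truncated absorbing probability of the target n) is submodular: for S₁ ⊆ S₂ ⊆ V and s ∈ V \ S₂, p_i^T(S₁ ∪ {s}) − p_i^T(S₁) ≥ p_i^T(S₂ ∪ {s}) − p_i^T(S₂). -/

import Mathlib

open Finset

variable {V : Type*}

/-- Edge-addition transition kernel on `Option V`, where `none` is the target node `n`.
For `i ∈ S`, node `i` gets an extra edge of weight `wc` to the target. -/
noncomputable def ker [Fintype V] [DecidableEq V] (w : V → V → ℝ) (wc : ℝ) (S : Finset V) :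
    Option V → Option V → ℝ
  | some i, some k => if i ∈ S then w i k / (wc + ∑ j, w i j) else w i k / (∑ j, w i j)
  | some i, none => if i ∈ S then wc / (wc + ∑ j, w i j) else 0
  | none, none => 1
  | none, some _ => 0

/-- Truncated absorbing probability of the target (`none`) under the edge-addition model. -/
noncomputable def AP [Fintype V] [DecidableEq V] (w : V → V → ℝ) (wc : ℝ) (S : Finset V) :
    ℕ → Option V → ℝ
  | 0, x => if x = none then 1 else 0
  | _ + 1, none => 1
  | t + 1, some i => ∑ k, ker w wc S (some i) k * AP w wc S t k

/-- Truncated hitting time of the target (`none`) under the edge-addition model. -/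
noncomputable def HT [Fintype V] [DecidableEq V] (w : V → V → ℝ) (wc : ℝ) (S : Finset V) :
    ℕ → Option V → ℝ
  | 0, _ => 0
  | _ + 1, none => 0
  | t + 1, some i => 1 + ∑ k, ker w wc S (some i) k * HT w wc S t k

section Aux

variable [Fintype V] [DecidableEq V] (w : V → V → ℝ) (wc : ℝ)

lemma AP_none (S : Finset V) (t : ℕ) : AP w wc S t none = 1 := by
  cases t <;> simp [AP]

lemma AP_succ_mem (hwc : 0 < wc) (S : Finset V) (t : ℕ) {i : V} (h : i ∈ S) :
    AP w wc S (t + 1) (some i) =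
      wc / (wc + ∑ j, w i j) + ∑ k, w i k / (wc + ∑ j, w i j) * AP w wc S t (some k) := by
  show (∑ k : Option V, ker w wc S (some i) k * AP w wc S t k) = _
  rw [Fintype.sum_option, AP_none]
  simp [ker, h]

lemma AP_succ_not_mem (S : Finset V) (t : ℕ) {i : V} (h : i ∉ S) :
    AP w wc S (t + 1) (some i) = ∑ k, w i k / (∑ j, w i j) * AP w wc S t (some k) := by
  show (∑ k : Option V, ker w wc S (some i) k * AP w wc S t k) = _
  rw [Fintype.sum_option, AP_none]
  simp [ker, h]

lemma ker_nonneg (hw : ∀ i j, 0 < w i j) (hwc : 0 < wc) (hd : ∀ i, 0 < ∑ j, w i j)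
    (S : Finset V) : ∀ x y, 0 ≤ ker w wc S x y := by
  intro x y
  match x, y with
  | some i, some k =>
    have h1 := hw i k
    have h2 := hd i
    have h3 : 0 < wc + ∑ j, w i j := by linarith
    simp only [ker]; split <;> positivity
  | some i, none =>
    have h2 := hd i
    have h3 : 0 < wc + ∑ j, w i j := by linarith
    simp only [ker]; split
    · positivity
    · exact le_refl 0
  | none, none => norm_num [ker]
  | none, some _ => simp [ker]

lemma ker_row_sum (hwc : 0 < wc) (hd : ∀ i, 0 < ∑ j, w i j) (S : Finset V) (i : V) :
    ∑ y : Option V, ker w wc S (some i) y = 1 := by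
  rw [Fintype.sum_option]
  by_cases h : i ∈ S
  · have h3 : wc + ∑ j, w i j ≠ 0 := by have := hd i; linarith
    simp only [ker, if_pos h]
    rw [← Finset.sum_div, ← add_div, div_eq_one_iff_eq h3]
  · have h3 : (∑ j, w i j) ≠ 0 := (hd i).ne'
    simp only [ker, if_neg h]
    rw [zero_add, ← Finset.sum_div, div_self h3]

lemma AP_nonneg (hw : ∀ i j, 0 < w i j) (hwc : 0 < wc) (hd : ∀ i, 0 < ∑ j, w i j)
    (S : Finset V) : ∀ t x, 0 ≤ AP w wc S t x := by
  intro t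
  induction t with
  | zero => intro x; cases x <;> simp [AP]
  | succ t ih =>
    intro x
    cases x with
    | none => simp [AP]
    | some i =>
      show 0 ≤ ∑ k : Option V, ker w wc S (some i) k * AP w wc S t k
      exact Finset.sum_nonneg fun k _ =>
        mul_nonneg (ker_nonneg w wc hw hwc hd S _ _) (ih k)

lemma AP_le_one (hw : ∀ i j, 0 < w i j) (hwc : 0 < wc) (hd : ∀ i, 0 < ∑ j, w i j)
    (S : Finset V) : ∀ t x, AP w wc S t x ≤ 1 := by
  intro t
  induction t with
  | zero => intro x; cases x <;> simp [AP]
  | succ t ih =>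
    intro x
    cases x with
    | none => simp [AP]
    | some i =>
      show (∑ k : Option V, ker w wc S (some i) k * AP w wc S t k) ≤ 1
      calc (∑ k : Option V, ker w wc S (some i) k * AP w wc S t k)
          ≤ ∑ k : Option V, ker w wc S (some i) k * 1 :=
            Finset.sum_le_sum fun k _ =>
              mul_le_mul_of_nonneg_left (ih k) (ker_nonneg w wc hw hwc hd S _ _)
        _ = 1 := by simp [ker_row_sum w wc hwc hd S i]

/-- For `i ∉ S` vs `i ∈ T`: key step of monotonicity. -/
lemma step_le (d : ℝ) (hdp : 0 < d) (hwc : 0 < wc) (a f : V → ℝ) (ha : ∀ k, 0 ≤ a k)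
    (hf1 : ∀ k, f k ≤ 1) (hsum : ∑ k, a k = d) :
    ∑ k, a k / d * f k ≤ wc / (wc + d) + ∑ k, a k / (wc + d) * f k := by
  have hwd : 0 < wc + d := by linarith
  have hdiff : (∑ k, a k / d * f k) - (∑ k, a k / (wc + d) * f k)
      = (∑ k, a k * f k) * (wc / (d * (wc + d))) := by
    rw [← Finset.sum_sub_distrib, Finset.sum_mul]
    refine Finset.sum_congr rfl fun k _ => ?_
    field_simp
    ring
  have hb : (∑ k, a k * f k) ≤ d := by
    calc (∑ k, a k * f k) ≤ ∑ k, a k * 1 :=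
          Finset.sum_le_sum fun k _ => mul_le_mul_of_nonneg_left (hf1 k) (ha k)
      _ = d := by simpa using hsum
  have hc : 0 ≤ wc / (d * (wc + d)) := by positivity
  have : (∑ k, a k * f k) * (wc / (d * (wc + d))) ≤ d * (wc / (d * (wc + d))) :=
    mul_le_mul_of_nonneg_right hb hc
  have hde : d * (wc / (d * (wc + d))) = wc / (wc + d) := by
    field_simp
  linarith [hdiff, this, hde ▸ this]

lemma AP_mono (hw : ∀ i j, 0 < w i j) (hwc : 0 < wc) (hd : ∀ i, 0 < ∑ j, w i j)
    {S T : Finset V} (hST : S ⊆ T) : ∀ t x, AP w wc S t x ≤ AP w wc T t x := by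
  intro t
  induction t with
  | zero => intro x; cases x <;> simp [AP]
  | succ t ih =>
    intro x
    cases x with
    | none => simp [AP]
    | some i =>
      by_cases hiT : i ∈ T
      · by_cases hiS : i ∈ S
        · rw [AP_succ_mem w wc hwc S t hiS, AP_succ_mem w wc hwc T t hiT]
          have hwd : 0 < wc + ∑ j, w i j := by have := hd i; linarith
          refine add_le_add_right (Finset.sum_le_sum fun k _ => ?_) _
          exact mul_le_mul_of_nonneg_left (ih (some k))
            (div_nonneg (hw i k).le hwd.le)
        · rw [AP_succ_not_mem w wc S t hiS, AP_succ_mem w wc hwc T t hiT]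
          calc (∑ k, w i k / (∑ j, w i j) * AP w wc S t (some k))
              ≤ ∑ k, w i k / (∑ j, w i j) * AP w wc T t (some k) :=
                Finset.sum_le_sum fun k _ => mul_le_mul_of_nonneg_left (ih (some k))
                  (by have := hw i k; have := hd i; positivity)
            _ ≤ wc / (wc + ∑ j, w i j) + ∑ k, w i k / (wc + ∑ j, w i j) * AP w wc T t (some k) :=
                step_le wc (∑ j, w i j) (hd i) hwc (w i) (fun k => AP w wc T t (some k))
                  (fun k => (hw i k).le) (fun k => AP_le_one w wc hw hwc hd T t (some k)) rfl
      · have hiS : i ∉ S := fun h => hiT (hST h)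
        rw [AP_succ_not_mem w wc S t hiS, AP_succ_not_mem w wc T t hiT]
        refine Finset.sum_le_sum fun k _ => ?_
        exact mul_le_mul_of_nonneg_left (ih (some k)) (by have := hw i k; have := hd i; positivity)

lemma term_ineq (d : ℝ) (hdp : 0 < d) (hwc : 0 < wc) {x1 x2 x1' x2' : ℝ}
    (h1 : x2' - x2 ≤ x1' - x1) (h2 : x1 ≤ x2) :
    x2' / (wc + d) - x2 / d ≤ x1' / (wc + d) - x1 / d := by
  have hwd : 0 < wc + d := by linarith
  have key : (x2' - x1') / (wc + d) ≤ (x2 - x1) / d := by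
    calc (x2' - x1') / (wc + d) ≤ (x2 - x1) / (wc + d) := by
          apply div_le_div_of_nonneg_right ?_ hwd.le
          linarith
      _ ≤ (x2 - x1) / d := by
          apply div_le_div_of_nonneg_left (by linarith) hdp (by linarith)
  rw [sub_div, sub_div] at key
  linarith

end Aux

/-- Under the edge-addition transition model, the truncated absorbing probability
`S ↦ p_i^T(S)` of the target is a submodular set function. -/
theorem AP_submodular [Fintype V] [DecidableEq V] (w : V → V → ℝ) (wc : ℝ)
    (hw : ∀ i j, 0 < w i j) (hwc : 0 < wc) (hd : ∀ i, 0 < ∑ j, w i j)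
    (S₁ S₂ : Finset V) (hS : S₁ ⊆ S₂) (s : V) (hs : s ∉ S₂) :
    ∀ (T : ℕ) (i : V),
      AP w wc (insert s S₂) T (some i) - AP w wc S₂ T (some i) ≤
        AP w wc (insert s S₁) T (some i) - AP w wc S₁ T (some i) := by
  intro T
  induction T with
  | zero => intro i; simp [AP]
  | succ t ih =>
    intro i
    have hdi := hd i
    have hwd : 0 < wc + ∑ j, w i j := by linarith
    by_cases his : i = s
    · subst his
      have h1' : i ∈ insert i S₁ := Finset.mem_insert_self i S₁
      have h2' : i ∈ insert i S₂ := Finset.mem_insert_self i S₂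
      have h1 : i ∉ S₁ := fun h => hs (hS h)
      rw [AP_succ_mem w wc hwc _ t h2', AP_succ_mem w wc hwc _ t h1',
        AP_succ_not_mem w wc S₂ t hs, AP_succ_not_mem w wc S₁ t h1]
      have key : ∀ k, w i k / (wc + ∑ j, w i j) * AP w wc (insert i S₂) t (some k)
            - w i k / (∑ j, w i j) * AP w wc S₂ t (some k)
          ≤ w i k / (wc + ∑ j, w i j) * AP w wc (insert i S₁) t (some k)
            - w i k / (∑ j, w i j) * AP w wc S₁ t (some k) := by
        intro k
        have e : ∀ x y : ℝ, w i k / (wc + ∑ j, w i j) * x - w i k / (∑ j, w i j) * y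
            = w i k * (x / (wc + ∑ j, w i j) - y / (∑ j, w i j)) := by
          intro x y; ring
        rw [e, e]
        refine mul_le_mul_of_nonneg_left ?_ (hw i k).le
        exact term_ineq wc (∑ j, w i j) hdi hwc
          (by have := ih k; linarith)
          (AP_mono w wc hw hwc hd hS t (some k))
      calc wc / (wc + ∑ j, w i j)
            + (∑ k, w i k / (wc + ∑ j, w i j) * AP w wc (insert i S₂) t (some k))
            - ∑ k, w i k / (∑ j, w i j) * AP w wc S₂ t (some k)
          = wc / (wc + ∑ j, w i j)
            + ∑ k, (w i k / (wc + ∑ j, w i j) * AP w wc (insert i S₂) t (some k)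
              - w i k / (∑ j, w i j) * AP w wc S₂ t (some k)) := by
            rw [Finset.sum_sub_distrib]; ring
        _ ≤ wc / (wc + ∑ j, w i j)
            + ∑ k, (w i k / (wc + ∑ j, w i j) * AP w wc (insert i S₁) t (some k)
              - w i k / (∑ j, w i j) * AP w wc S₁ t (some k)) := by
            exact add_le_add_right (Finset.sum_le_sum fun k _ => key k) _
        _ = wc / (wc + ∑ j, w i j)
            + (∑ k, w i k / (wc + ∑ j, w i j) * AP w wc (insert i S₁) t (some k))
            - ∑ k, w i k / (∑ j, w i j) * AP w wc S₁ t (some k) := by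
            rw [Finset.sum_sub_distrib]; ring
    · by_cases hi1 : i ∈ S₁
      · have hi2 : i ∈ S₂ := hS hi1
        rw [AP_succ_mem w wc hwc _ t (Finset.mem_insert_of_mem hi2),
          AP_succ_mem w wc hwc _ t (Finset.mem_insert_of_mem hi1),
          AP_succ_mem w wc hwc _ t hi2, AP_succ_mem w wc hwc _ t hi1]
        have : ∀ k, w i k / (wc + ∑ j, w i j) * AP w wc (insert s S₂) t (some k)
              - w i k / (wc + ∑ j, w i j) * AP w wc S₂ t (some k)
            ≤ w i k / (wc + ∑ j, w i j) * AP w wc (insert s S₁) t (some k)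
              - w i k / (wc + ∑ j, w i j) * AP w wc S₁ t (some k) := by
          intro k
          have e : ∀ x y : ℝ, w i k / (wc + ∑ j, w i j) * x - w i k / (wc + ∑ j, w i j) * y
              = w i k / (wc + ∑ j, w i j) * (x - y) := by intro x y; ring
          rw [e, e]
          exact mul_le_mul_of_nonneg_left (ih k) (div_nonneg (hw i k).le hwd.le)
        have hsum := Finset.sum_le_sum (fun k (_ : k ∈ Finset.univ) => this k)
        rw [Finset.sum_sub_distrib, Finset.sum_sub_distrib] at hsum
        linarith
      · by_cases hi2 : i ∈ S₂
        · -- i ∈ S₂ \ S₁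
          rw [AP_succ_mem w wc hwc _ t (Finset.mem_insert_of_mem hi2),
            AP_succ_mem w wc hwc _ t hi2,
            AP_succ_not_mem w wc (insert s S₁) t (by simp [his, hi1]),
            AP_succ_not_mem w wc S₁ t hi1]
          have : ∀ k, w i k / (wc + ∑ j, w i j) * AP w wc (insert s S₂) t (some k)
                - w i k / (wc + ∑ j, w i j) * AP w wc S₂ t (some k)
              ≤ w i k / (∑ j, w i j) * AP w wc (insert s S₁) t (some k)
                - w i k / (∑ j, w i j) * AP w wc S₁ t (some k) := by
            intro k
            have hmono : 0 ≤ AP w wc (insert s S₁) t (some k) - AP w wc S₁ t (some k) := by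
              have := AP_mono w wc hw hwc hd (Finset.subset_insert s S₁) t (some k)
              linarith
            have e : ∀ (c : ℝ) (x y : ℝ), c * x - c * y = c * (x - y) := by
              intro c x y; ring
            rw [e, e]
            calc w i k / (wc + ∑ j, w i j)
                  * (AP w wc (insert s S₂) t (some k) - AP w wc S₂ t (some k))
                ≤ w i k / (wc + ∑ j, w i j)
                  * (AP w wc (insert s S₁) t (some k) - AP w wc S₁ t (some k)) :=
                  mul_le_mul_of_nonneg_left (ih k) (div_nonneg (hw i k).le hwd.le)
              _ ≤ w i k / (∑ j, w i j)
                  * (AP w wc (insert s S₁) t (some k) - AP w wc S₁ t (some k)) := by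
                  refine mul_le_mul_of_nonneg_right ?_ hmono
                  exact div_le_div_of_nonneg_left (hw i k).le hdi (by linarith)
          have hsum := Finset.sum_le_sum (fun k (_ : k ∈ Finset.univ) => this k)
          rw [Finset.sum_sub_distrib, Finset.sum_sub_distrib] at hsum
          linarith
        · -- i ∉ S₂
          rw [AP_succ_not_mem w wc (insert s S₂) t (by simp [his, hi2]),
            AP_succ_not_mem w wc (insert s S₁) t (by simp [his, hi1]),
            AP_succ_not_mem w wc S₂ t hi2, AP_succ_not_mem w wc S₁ t hi1]
          have : ∀ k, w i k / (∑ j, w i j) * AP w wc (insert s S₂) t (some k)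
                - w i k / (∑ j, w i j) * AP w wc S₂ t (some k)
              ≤ w i k / (∑ j, w i j) * AP w wc (insert s S₁) t (some k)
                - w i k / (∑ j, w i j) * AP w wc S₁ t (some k) := by
            intro k
            have e : ∀ (c : ℝ) (x y : ℝ), c * x - c * y = c * (x - y) := by
              intro c x y; ring
            rw [e, e]
            exact mul_le_mul_of_nonneg_left (ih k) (div_nonneg (hw i k).le hdi.le)
          have hsum := Finset.sum_le_sum (fun k (_ : k ∈ Finset.univ) => this k)
          rw [Finset.sum_sub_distrib, Finset.sum_sub_distrib] at hsum
          linarith
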